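/- Let X be a finite set with |X| ≥ 3 and S a commutative nilpotent subsemigroup of T(X) whose zero e has rank at least 2. Then |S| < ξ(|X|), where ξ(n) = max{t^(n−t) : 1 ≤ t ≤ n}. -/

import Mathlib

/-- `S` is a subsemigroup of the full transformation semigroup on `X`
(maps act on the right, so the product `β·γ` is `γ ∘ β`). -/
def IsTransSub {X : Type*} (S : Set (X → X)) : Prop :=
  ∀ β ∈ S, ∀ γ ∈ S, (γ ∘ β) ∈ S

/-- `e` is a zero element of `S`: `βe = eβ = e` for all `β ∈ S`. -/
def IsZeroElem {X : Type*} (S : Set (X → X)) (e : X → X) : Prop :=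
  e ∈ S ∧ ∀ β ∈ S, e ∘ β = e ∧ β ∘ e = e

/-- `S` is nilpotent with zero `e`: some `m ≥ 1` such that every product of
`m` elements of `S` equals `e`. -/
def IsNilpotentSub {X : Type*} (S : Set (X → X)) (e : X → X) : Prop :=
  ∃ m : ℕ, 0 < m ∧ ∀ L : List (X → X), L.length = m → (∀ f ∈ L, f ∈ S) →
    L.foldr (· ∘ ·) id = e

/-- `S` is commutative. -/
def IsCommSub {X : Type*} (S : Set (X → X)) : Prop :=
  ∀ β ∈ S, ∀ γ ∈ S, β ∘ γ = γ ∘ β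

/-- `S` is a null semigroup with zero `e`: every product of two elements is `e`. -/
def IsNullSub {X : Type*} (S : Set (X → X)) (e : X → X) : Prop :=
  ∀ β ∈ S, ∀ γ ∈ S, γ ∘ β = e

/-- `ξ(n) = max { t ^ (n - t) : 1 ≤ t ≤ n }`. -/
def xi (n : ℕ) : ℕ := (Finset.Icc 1 n).sup (fun t => t ^ (n - t))

/-- `α(n) = max { t ∈ {1,…,n} : t ^ (n - t) = ξ(n) }`. -/
def alphaMax (n : ℕ) : ℕ :=
  ((Finset.Icc 1 n).filter (fun t => t ^ (n - t) = xi n)).sup id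

/-- The set of values of products of `k` elements of `S`. -/
def Wk {X : Type*} (S : Set (X → X)) (k : ℕ) : Set X :=
  {x | ∃ L : List (X → X), L.length = k ∧ (∀ f ∈ L, f ∈ S) ∧
    x ∈ Set.range (L.foldr (· ∘ ·) id)}

lemma mem_Wk_one {X : Type*} {S : Set (X → X)} {β : X → X} (hβ : β ∈ S) (x : X) :
    β x ∈ Wk S 1 := by
  refine ⟨[β], rfl, ?_, ⟨x, ?_⟩⟩
  · intro f hf
    have : f = β := by simpa using hf
    exact this ▸ hβ
  · simp

lemma agree_aux {X : Type*} {S : Set (X → X)} (hcomm : IsCommSub S)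
    {β γ : X → X} (hβ : β ∈ S) (hγ : γ ∈ S)
    (h0 : ∀ u, u ∉ Wk S 1 → β u = γ u) :
    ∀ j : ℕ, ∀ u, u ∉ Wk S (j + 1) → β u = γ u := by
  intro j
  induction j with
  | zero => exact h0
  | succ j ih =>
    intro u hu
    by_cases h1 : u ∈ Wk S (j + 1)
    · obtain ⟨L, hL, hLS, x, hx⟩ := h1
      obtain ⟨f, L', rfl⟩ : ∃ f L', L = f :: L' := by
        cases L with
        | nil => simp at hL
        | cons f L' => exact ⟨f, L', rfl⟩
      have hL' : L'.length = j := by simpa using hL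
      have hf : f ∈ S := hLS f List.mem_cons_self
      set z := L'.foldr (· ∘ ·) id x with hz
      have hxu : f z = u := hx
      have hzmem : z ∈ Wk S j :=
        ⟨L', hL', fun g hg => hLS g (List.mem_cons_of_mem f hg), ⟨x, rfl⟩⟩
      have hznot : z ∉ Wk S (j + 1) := by
        rintro ⟨M, hM, hMS, x', hx'⟩
        apply hu
        refine ⟨f :: M, by simp [hM], ?_, ⟨x', ?_⟩⟩
        · intro g hg
          rcases List.mem_cons.mp hg with h | h
          · exact h ▸ hf
          · exact hMS g h
        · simp only [List.foldr_cons, Function.comp_apply]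
          rw [hx', hxu]
      have hbz : β z = γ z := ih z hznot
      calc β u = β (f z) := by rw [hxu]
        _ = f (β z) := congrFun (hcomm β hβ f hf) z
        _ = f (γ z) := by rw [hbz]
        _ = γ (f z) := (congrFun (hcomm γ hγ f hf) z).symm
        _ = γ u := by rw [hxu]
    · exact ih u h1

lemma eq_of_agree_off_W {X : Type*} {S : Set (X → X)} (hcomm : IsCommSub S)
    {e : X → X} (he : IsZeroElem S e) (hnil : IsNilpotentSub S e)
    {β γ : X → X} (hβ : β ∈ S) (hγ : γ ∈ S)
    (h0 : ∀ u, u ∉ Wk S 1 → β u = γ u) : β = γ := by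
  obtain ⟨m, hm, hprod⟩ := hnil
  funext u
  by_cases hu : u ∈ Wk S m
  · obtain ⟨L, hL, hLS, x, hx⟩ := hu
    have hLe : L.foldr (· ∘ ·) id = e := hprod L hL hLS
    have hue : u = e x := by rw [← hx, hLe]
    have h1 : β (e x) = e x := congrFun (he.2 β hβ).2 x
    have h2 : γ (e x) = e x := congrFun (he.2 γ hγ).2 x
    rw [hue, h1, h2]
  · have hmm : m = (m - 1) + 1 := by omega
    exact agree_aux hcomm hβ hγ h0 (m - 1) u (by rw [← hmm]; exact hu)

theorem stmt11 {X : Type*} [Fintype X] (hX : 3 ≤ Fintype.card X)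
    (S : Set (X → X)) (hS : IsTransSub S) (hcomm : IsCommSub S)
    (e : X → X) (he : IsZeroElem S e) (hnil : IsNilpotentSub S e)
    (hrank : 2 ≤ (Set.range e).ncard) :
    S.ncard < xi (Fintype.card X) := by
  classical
  set n := Fintype.card X with hn
  set W : Set X := Wk S 1 with hWdef
  have heS : e ∈ S := he.1
  have hYW : Set.range e ⊆ W := by
    rintro _ ⟨x, rfl⟩; exact mem_Wk_one heS x
  have hWfin : W.Finite := Set.toFinite _
  have hw2 : 2 ≤ W.ncard := le_trans hrank (Set.ncard_le_ncard hYW hWfin)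
  set w := W.ncard with hw
  have hwn : w ≤ n := by
    have := Set.ncard_le_ncard (Set.subset_univ W) (Set.toFinite _)
    rwa [Set.ncard_univ, Nat.card_eq_fintype_card] at this
  have hee : e ∘ e = e := (he.2 e heS).1
  set D : Set X := Wᶜ with hDdef
  set d := D.ncard with hd
  have hcardsum : w + d = n := by
    have := Set.ncard_add_ncard_compl W
    rwa [Nat.card_eq_fintype_card] at this
  -- choice of a point of range e different from e x
  have hchoice : ∀ x : X, ∃ y, y ∈ Set.range e ∧ y ≠ e x := fun x =>
    Set.exists_ne_of_one_lt_ncard (lt_of_lt_of_le one_lt_two hrank) (e x)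
  choose y' hy'mem hy'ne using hchoice
  -- value sets
  set V : X → Set X := fun x => W \ {y' x} with hVdef
  have hval : ∀ β ∈ S, ∀ x : X, β x ∈ V x := by
    intro β hβ x
    refine ⟨mem_Wk_one hβ x, ?_⟩
    simp only [Set.mem_singleton_iff]
    intro hbx
    obtain ⟨z, hz⟩ := hy'mem x
    have h1 : e (β x) = e x := congrFun (he.2 β hβ).1 x
    have h2 : e (y' x) = y' x := by
      rw [← hz]; exact congrFun hee z
    rw [hbx, h2] at h1
    exact hy'ne x h1
  haveI : Fintype ↥D := Fintype.ofFinite _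
  -- the injection
  let Φ : ↥S → (∀ x : ↥D, ↥(V x.1)) := fun β x => ⟨β.1 x.1, hval β.1 β.2 x.1⟩
  have hΦinj : Function.Injective Φ := by
    intro β γ h
    apply Subtype.ext
    apply eq_of_agree_off_W hcomm he hnil β.2 γ.2
    intro u hu
    have hu' : u ∈ D := hu
    exact congrArg Subtype.val (congrFun h ⟨u, hu'⟩)
  have hle : S.ncard ≤ (w - 1) ^ d := by
    have h1 : S.ncard = Nat.card ↥S := (Nat.card_coe_set_eq S).symm
    have h2 : Nat.card ↥S ≤ Nat.card (∀ x : ↥D, ↥(V x.1)) :=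
      Nat.card_le_card_of_injective Φ hΦinj
    have h3 : Nat.card (∀ x : ↥D, ↥(V x.1)) = ∏ x : ↥D, Nat.card ↥(V x.1) :=
      Nat.card_pi
    have h4 : ∀ x : ↥D, Nat.card ↥(V x.1) = w - 1 := by
      intro x
      rw [Nat.card_coe_set_eq]
      have : (W \ {y' x.1}).ncard = W.ncard - 1 :=
        Set.ncard_diff_singleton_of_mem (hYW (hy'mem x.1))
      simpa [hVdef] using this
    have h5 : (∏ x : ↥D, Nat.card ↥(V x.1)) = (w - 1) ^ d := by
      rw [Finset.prod_congr rfl (fun x _ => h4 x), Finset.prod_const,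
        Finset.card_univ, ← Nat.card_eq_fintype_card, Nat.card_coe_set_eq]
    omega
  by_cases hd0 : d = 0
  · have hS1 : S.ncard ≤ 1 := by simpa [hd0] using hle
    have h2mem : (2 : ℕ) ∈ Finset.Icc 1 n := by
      simp only [Finset.mem_Icc]; omega
    have hxi2 : 2 ≤ xi n := by
      calc (2:ℕ) ≤ 2 ^ (n - 2) := Nat.le_self_pow (by omega) 2
        _ ≤ xi n := by
          show _ ≤ (Finset.Icc 1 n).sup (fun t => t ^ (n - t))
          exact Finset.le_sup (f := fun t => t ^ (n - t)) h2mem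
    omega
  · have hlt : (w - 1) ^ d < w ^ d :=
      Nat.pow_lt_pow_left (by omega) hd0
    have hwmem : w ∈ Finset.Icc 1 n := by
      simp only [Finset.mem_Icc]; omega
    have hxile : w ^ (n - w) ≤ xi n := by
      show _ ≤ (Finset.Icc 1 n).sup (fun t => t ^ (n - t))
      exact Finset.le_sup (f := fun t => t ^ (n - t)) hwmem
    have hdnw : d = n - w := by omega
    calc S.ncard ≤ (w - 1) ^ d := hle
      _ < w ^ d := hlt
      _ = w ^ (n - w) := by rw [hdnw]
      _ ≤ xi n := hxile
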